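/- Let n ≥ 1 and let A ∈ ℂ^{n×n} have n pairwise distinct eigenvalues. Suppose A = U₁S₁U₁ᴴ = U₂S₂U₂ᴴ are two Schur factorisations of A, i.e., U₁, U₂ are unitary and S₁, S₂ are upper triangular (in particular the diagonal entries of S₁ are pairwise distinct and form the same set as those of S₂, namely the spectrum of A). Then for all complex numbers μ, ν: there exist indices i, j with (S₁)_{ii} = μ, (S₁)_{jj} = ν and i block equivalent to j with respect to S₁, if and only if there exist indices i, j with (S₂)_{ii} = μ, (S₂)_{jj} = ν and i block equivalent to j with respect to S₂. In other words, the partition of the spectrum of A into block-equivalence classes is independent of the chosen Schur factorisation. -/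

import Mathlib

open Matrix

/-- Indices `i` and `j` are directly related for a matrix `T` if `i ≠ j` and
`T i j ≠ 0` or `T j i ≠ 0`. -/
def DirectlyRelated {n : ℕ} (T : Matrix (Fin n) (Fin n) ℂ) (i j : Fin n) : Prop :=
  i ≠ j ∧ (T i j ≠ 0 ∨ T j i ≠ 0)

/-- Block equivalence of indices: the equivalence relation generated by direct
relation. -/
def BlockEquiv {n : ℕ} (T : Matrix (Fin n) (Fin n) ℂ) (i j : Fin n) : Prop :=
  Relation.EqvGen (DirectlyRelated T) i j

namespace SchurBlock

open Polynomial

variable {n : ℕ}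

/-- upper triangular predicate -/
def UT (T : Matrix (Fin n) (Fin n) ℂ) : Prop := ∀ i j : Fin n, j < i → T i j = 0

lemma UT.mul {T M : Matrix (Fin n) (Fin n) ℂ} (hT : UT T) (hM : UT M) : UT (T * M) := by
  intro i j hji
  rw [Matrix.mul_apply]
  apply Finset.sum_eq_zero
  intro k _
  rcases lt_or_ge k i with h | h
  · rw [hT i k h, zero_mul]
  · rw [hM k j (lt_of_lt_of_le hji h), mul_zero]

lemma UT.diag_mul {T M : Matrix (Fin n) (Fin n) ℂ} (hT : UT T) (hM : UT M) (i : Fin n) :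
    (T * M) i i = T i i * M i i := by
  rw [Matrix.mul_apply]
  apply Finset.sum_eq_single i
  · intro k _ hk
    rcases lt_or_gt_of_ne hk with h | h
    · rw [hT i k h, zero_mul]
    · rw [hM k i h, mul_zero]
  · intro h; exact absurd (Finset.mem_univ i) h

lemma UT.pow {T : Matrix (Fin n) (Fin n) ℂ} (hT : UT T) (k : ℕ) : UT (T ^ k) := by
  induction k with
  | zero =>
    intro i j hji
    simp [pow_zero, Matrix.one_apply, (Fin.ne_of_lt hji).symm]
  | succ k ih =>
    rw [pow_succ]
    exact ih.mul hT

lemma UT.diag_pow {T : Matrix (Fin n) (Fin n) ℂ} (hT : UT T) (k : ℕ) (i : Fin n) :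
    (T ^ k) i i = (T i i) ^ k := by
  induction k with
  | zero => simp [pow_zero, Matrix.one_apply]
  | succ k ih => rw [pow_succ, (hT.pow k).diag_mul hT, ih, pow_succ]

lemma UT.aeval {T : Matrix (Fin n) (Fin n) ℂ} (hT : UT T) (p : ℂ[X]) :
    UT (Polynomial.aeval T p) ∧ ∀ i, (Polynomial.aeval T p) i i = p.eval (T i i) := by
  induction p using Polynomial.induction_on' with
  | add p q hp hq =>
    refine ⟨?_, ?_⟩
    · intro i j hji
      rw [map_add, Matrix.add_apply, hp.1 i j hji, hq.1 i j hji, add_zero]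
    · intro i
      rw [map_add, Matrix.add_apply, hp.2 i, hq.2 i, eval_add]
  | monomial k c =>
    have hmono : (Polynomial.aeval T) ((Polynomial.monomial k) c) = c • T ^ k := by
      rw [Polynomial.aeval_monomial]
      rw [show (algebraMap ℂ (Matrix (Fin n) (Fin n) ℂ)) c = c • 1 from
        Algebra.algebraMap_eq_smul_one c]
      rw [smul_mul_assoc, one_mul]
    refine ⟨?_, ?_⟩
    · intro i j hji
      rw [hmono, Matrix.smul_apply, hT.pow k i j hji, smul_zero]
    · intro i
      rw [hmono, Matrix.smul_apply, hT.diag_pow k i, eval_monomial, smul_eq_mul]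

/-- any matrix commuting with an upper triangular matrix with injective diagonal
is upper triangular -/
lemma commutant_ut {T M : Matrix (Fin n) (Fin n) ℂ} (hT : UT T)
    (hd : Function.Injective fun i : Fin n => T i i) (hc : M * T = T * M) :
    UT M := by
  suffices H : ∀ m : ℕ, ∀ i j : Fin n, j < i → n ≤ m + (i.val - j.val) → M i j = 0 by
    intro i j h
    exact H n i j h (by omega)
  intro m
  induction m with
  | zero =>
    intro i j hij hm
    exfalso
    have := i.isLt
    omega
  | succ m ih =>
    intro i j hij hm
    have hij' : j.val < i.val := hij
    have h1 : (M * T) i j = M i j * T j j := by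
      rw [Matrix.mul_apply]
      apply Finset.sum_eq_single j
      · intro k _ hk
        rcases lt_or_gt_of_ne hk with h | h
        · have h' : k.val < j.val := h
          rw [ih i k (h.trans hij) (by omega), zero_mul]
        · rw [hT k j h, mul_zero]
      · intro h; exact absurd (Finset.mem_univ j) h
    have h2 : (T * M) i j = T i i * M i j := by
      rw [Matrix.mul_apply]
      apply Finset.sum_eq_single i
      · intro k _ hk
        rcases lt_or_gt_of_ne hk with h | h
        · rw [hT i k h, zero_mul]
        · have h' : i.val < k.val := h
          rw [ih k j (hij.trans h) (by omega), mul_zero]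
      · intro h; exact absurd (Finset.mem_univ i) h
    have heq : M i j * T j j = T i i * M i j := by
      rw [← h1, ← h2, hc]
    by_contra hM
    have : T j j = T i i := by
      rw [mul_comm (M i j) (T j j)] at heq
      exact mul_right_cancel₀ hM heq
    exact absurd (hd this.symm) (Fin.ne_of_lt hij).symm

/-- a commutant element with zero diagonal is zero -/
lemma commutant_eq_zero {T M : Matrix (Fin n) (Fin n) ℂ} (hT : UT T)
    (hd : Function.Injective fun i : Fin n => T i i) (hc : M * T = T * M)
    (h0 : ∀ i, M i i = 0) : M = 0 := by
  have hM : UT M := commutant_ut hT hd hc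
  suffices H : ∀ m : ℕ, ∀ i j : Fin n, j.val - i.val ≤ m → M i j = 0 by
    ext i j
    exact H n i j (by omega)
  intro m
  induction m with
  | zero =>
    intro i j hm
    rcases lt_trichotomy i j with h | h | h
    · exfalso; have : i.val < j.val := h; omega
    · rw [h]; exact h0 j
    · exact hM i j h
  | succ m ih =>
    intro i j hm
    by_cases hle : j.val - i.val ≤ m
    · exact ih i j hle
    have hij : i < j := by
      rw [Fin.lt_def]; omega
    have hij' : i.val < j.val := hij
    have h1 : (M * T) i j = M i j * T j j := by
      rw [Matrix.mul_apply]
      apply Finset.sum_eq_single j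
      · intro k _ hk
        rcases lt_or_gt_of_ne hk with h | h
        · have h' : k.val < j.val := h
          rw [ih i k (by omega), zero_mul]
        · rw [hT k j h, mul_zero]
      · intro h; exact absurd (Finset.mem_univ j) h
    have h2 : (T * M) i j = T i i * M i j := by
      rw [Matrix.mul_apply]
      apply Finset.sum_eq_single i
      · intro k _ hk
        rcases lt_or_gt_of_ne hk with h | h
        · rw [hT i k h, zero_mul]
        · have h' : i.val < k.val := h
          rw [ih k j (by omega), mul_zero]
      · intro h; exact absurd (Finset.mem_univ i) h
    have heq : M i j * T j j = T i i * M i j := by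
      rw [← h1, ← h2, hc]
    by_contra hMij
    have : T j j = T i i := by
      rw [mul_comm (M i j) (T j j)] at heq
      exact mul_right_cancel₀ hMij heq
    exact absurd (hd this.symm) (Fin.ne_of_lt hij)

/-- the diagonal of a hermitian commutant element is constant on block equivalence
classes -/
lemma diag_const_on_blockEquiv {S P : Matrix (Fin n) (Fin n) ℂ} (hS : UT S)
    (hd : Function.Injective fun i : Fin n => S i i) (hPH : Pᴴ = P)
    (hc : P * S = S * P) {i j : Fin n} (h : BlockEquiv S i j) : P i i = P j j := by
  have hut : UT P := commutant_ut hS hd hc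
  have hoff : ∀ k l : Fin n, k ≠ l → P k l = 0 := by
    intro k l hkl
    rcases lt_or_gt_of_ne hkl with h | h
    · have : Pᴴ k l = star (P l k) := rfl
      rw [← hPH, this, hut l k h, star_zero]
    · exact hut k l h
  have key : ∀ a b : Fin n, a ≠ b → S a b ≠ 0 → P a a = P b b := by
    intro a b hab hS0
    have h1 : (P * S) a b = P a a * S a b := by
      rw [Matrix.mul_apply]
      apply Finset.sum_eq_single a
      · intro k _ hk
        rw [hoff a k (Ne.symm hk), zero_mul]
      · intro h; exact absurd (Finset.mem_univ a) h
    have h2 : (S * P) a b = S a b * P b b := by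
      rw [Matrix.mul_apply]
      apply Finset.sum_eq_single b
      · intro k _ hk
        rw [hoff k b hk, mul_zero]
      · intro h; exact absurd (Finset.mem_univ b) h
    have : P a a * S a b = S a b * P b b := by rw [← h1, ← h2, hc]
    rw [mul_comm (S a b) (P b b)] at this
    exact mul_right_cancel₀ hS0 this
  induction h with
  | rel a b hab =>
    obtain ⟨hne, hor⟩ := hab
    rcases hor with h | h
    · exact key a b hne h
    · exact (key b a (Ne.symm hne) h).symm
  | refl a => rfl
  | symm a b _ ih => exact ih.symm
  | trans a b c _ _ ih1 ih2 => exact ih1.trans ih2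

lemma mul_cancel_left {A B : Matrix (Fin n) (Fin n) ℂ} (h : A * B = 1)
    (X : Matrix (Fin n) (Fin n) ℂ) : A * (B * X) = X := by
  rw [← Matrix.mul_assoc, h, Matrix.one_mul]

lemma conj_pow {W S : Matrix (Fin n) (Fin n) ℂ} (hW : Wᴴ * W = 1) (hW' : W * Wᴴ = 1)
    (k : ℕ) : Wᴴ * S ^ k * W = (Wᴴ * S * W) ^ k := by
  induction k with
  | zero => rw [pow_zero, pow_zero, Matrix.mul_one, hW]
  | succ k ih =>
    rw [pow_succ', pow_succ', ← ih]
    simp only [Matrix.mul_assoc, mul_cancel_left hW']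

lemma conj_aeval {W S : Matrix (Fin n) (Fin n) ℂ} (hW : Wᴴ * W = 1) (hW' : W * Wᴴ = 1)
    (p : ℂ[X]) : Wᴴ * (Polynomial.aeval S p) * W = Polynomial.aeval (Wᴴ * S * W) p := by
  induction p using Polynomial.induction_on' with
  | add p q hp hq =>
    rw [_root_.map_add, _root_.map_add, Matrix.mul_add, Matrix.add_mul, hp, hq]
  | monomial k c =>
    rw [Polynomial.aeval_monomial, Polynomial.aeval_monomial]
    rw [show (algebraMap ℂ (Matrix (Fin n) (Fin n) ℂ)) c = c • 1 from
      Algebra.algebraMap_eq_smul_one c]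
    simp only [smul_mul_assoc, one_mul, Matrix.mul_smul]
    rw [conj_pow hW hW' k]

lemma aeval_comm {S : Matrix (Fin n) (Fin n) ℂ} (p : ℂ[X]) :
    (Polynomial.aeval S p) * S = S * (Polynomial.aeval S p) := by
  have h1 : Polynomial.aeval S (p * X) = Polynomial.aeval S p * S := by
    rw [_root_.map_mul, Polynomial.aeval_X]
  have h2 : Polynomial.aeval S (X * p) = S * Polynomial.aeval S p := by
    rw [_root_.map_mul, Polynomial.aeval_X]
  rw [← h1, ← h2, mul_comm]

/-- determinant of shifted upper triangular matrix -/
lemma det_shift {S : Matrix (Fin n) (Fin n) ℂ} (hS : UT S) (x : ℂ) :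
    (S - x • 1).det = ∏ i, (S i i - x) := by
  have hbt : (S - x • (1 : Matrix (Fin n) (Fin n) ℂ)).BlockTriangular id := by
    intro i j hji
    have hji' : j < i := hji
    simp only [Matrix.sub_apply, Matrix.smul_apply, hS i j hji',
      Matrix.one_apply_ne (Fin.ne_of_lt hji').symm, smul_zero, sub_zero]
  rw [Matrix.det_of_upperTriangular hbt]
  apply Finset.prod_congr rfl
  intro i _
  simp [Matrix.sub_apply, Matrix.smul_apply, Matrix.one_apply_eq, smul_eq_mul]

/-- characteristic products agree for unitarily conjugated triangulars -/
lemma diag_prod_eq {S₁ S₂ W : Matrix (Fin n) (Fin n) ℂ}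
    (hW : Wᴴ * W = 1) (hW' : W * Wᴴ = 1)
    (hS₁ : UT S₁) (hS₂ : UT S₂) (hconj : W * S₁ * Wᴴ = S₂) (x : ℂ) :
    ∏ i, (S₁ i i - x) = ∏ i, (S₂ i i - x) := by
  have key : S₂ - x • 1 = W * (S₁ - x • (1 : Matrix (Fin n) (Fin n) ℂ)) * Wᴴ := by
    rw [Matrix.mul_sub, Matrix.sub_mul, hconj, Matrix.mul_smul, Matrix.smul_mul,
      Matrix.mul_one, hW']
  have hdetW : Wᴴ.det * W.det = 1 := by
    rw [← Matrix.det_mul, hW, Matrix.det_one]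
  rw [← det_shift hS₁ x, ← det_shift hS₂ x, key, Matrix.det_mul, Matrix.det_mul,
    mul_comm W.det, mul_assoc, ← Matrix.det_mul, hW', Matrix.det_one, mul_one]

lemma diag_mem_iff {S₁ S₂ W : Matrix (Fin n) (Fin n) ℂ}
    (hW : Wᴴ * W = 1) (hW' : W * Wᴴ = 1)
    (hS₁ : UT S₁) (hS₂ : UT S₂) (hconj : W * S₁ * Wᴴ = S₂) (μ : ℂ) :
    (∃ i, S₁ i i = μ) ↔ (∃ i, S₂ i i = μ) := by
  have h := diag_prod_eq hW hW' hS₁ hS₂ hconj μ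
  constructor
  · rintro ⟨i, hi⟩
    have : ∏ k, (S₂ k k - μ) = 0 := by
      rw [← h]
      exact Finset.prod_eq_zero (Finset.mem_univ i) (by rw [hi, sub_self])
    obtain ⟨k, _, hk⟩ := Finset.prod_eq_zero_iff.mp this
    exact ⟨k, by linear_combination hk⟩
  · rintro ⟨i, hi⟩
    have : ∏ k, (S₁ k k - μ) = 0 := by
      rw [h]
      exact Finset.prod_eq_zero (Finset.mem_univ i) (by rw [hi, sub_self])
    obtain ⟨k, _, hk⟩ := Finset.prod_eq_zero_iff.mp this
    exact ⟨k, by linear_combination hk⟩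

lemma diag_inj₂ {S₁ S₂ : Matrix (Fin n) (Fin n) ℂ}
    (h1 : Function.Injective fun i : Fin n => S₁ i i)
    (hmem : ∀ μ : ℂ, (∃ i, S₁ i i = μ) → (∃ i, S₂ i i = μ)) :
    Function.Injective fun i : Fin n => S₂ i i := by
  classical
  set f : Fin n → ℂ := fun i => S₁ i i
  set g : Fin n → ℂ := fun i => S₂ i i
  have hsub : Finset.univ.image f ⊆ Finset.univ.image g := by
    intro x hx
    obtain ⟨i, _, hi⟩ := Finset.mem_image.mp hx
    obtain ⟨k, hk⟩ := hmem x ⟨i, hi⟩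
    exact Finset.mem_image.mpr ⟨k, Finset.mem_univ k, hk⟩
  have hcard1 : (Finset.univ.image f).card = n := by
    rw [Finset.card_image_of_injective _ h1, Finset.card_univ, Fintype.card_fin]
  have hcard2 : (Finset.univ.image g).card = (Finset.univ : Finset (Fin n)).card := by
    refine le_antisymm ?_ ?_
    · exact Finset.card_image_le
    calc (Finset.univ : Finset (Fin n)).card = n := by
          rw [Finset.card_univ, Fintype.card_fin]
      _ = (Finset.univ.image f).card := hcard1.symm
      _ ≤ (Finset.univ.image g).card := Finset.card_le_card hsub
  have := Finset.card_image_iff.mp hcard2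
  rw [Finset.coe_univ] at this
  exact Set.injOn_univ.mp this

/-- The key one-directional transfer lemma. -/
lemma key_transfer {S₁ S₂ W : Matrix (Fin n) (Fin n) ℂ}
    (hW : Wᴴ * W = 1) (hW' : W * Wᴴ = 1)
    (hS₁ : UT S₁) (hS₂ : UT S₂) (hconj : Wᴴ * S₂ * W = S₁)
    (h1 : Function.Injective fun i : Fin n => S₁ i i)
    (h2 : Function.Injective fun i : Fin n => S₂ i i)
    (hmem : ∀ μ : ℂ, (∃ i, S₁ i i = μ) → (∃ i, S₂ i i = μ))
    (μ ν : ℂ) :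
    (∃ i j : Fin n, S₁ i i = μ ∧ S₁ j j = ν ∧ BlockEquiv S₁ i j) →
    (∃ i j : Fin n, S₂ i i = μ ∧ S₂ j j = ν ∧ BlockEquiv S₂ i j) := by
  classical
  rintro ⟨i, j, hμ, hν, hbe⟩
  obtain ⟨i', hi'⟩ := hmem μ ⟨i, hμ⟩
  obtain ⟨j', hj'⟩ := hmem ν ⟨j, hν⟩
  refine ⟨i', j', hi', hj', ?_⟩
  by_contra hne
  -- the diagonal 0/1 matrix indicating the block class of i' for S₂
  set d : Fin n → ℂ := fun k => if BlockEquiv S₂ i' k then 1 else 0 with hd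
  set P : Matrix (Fin n) (Fin n) ℂ := Matrix.diagonal d with hP
  have hPH : Pᴴ = P := by
    have hstar : star d = d := by
      funext k
      by_cases h : BlockEquiv S₂ i' k <;> simp [hd, h]
    rw [hP, Matrix.diagonal_conjTranspose, hstar]
  have hPS : P * S₂ = S₂ * P := by
    ext k l
    rw [hP, Matrix.diagonal_mul, Matrix.mul_diagonal]
    by_cases hkl : k = l
    · rw [hkl, mul_comm]
    by_cases hz : S₂ k l = 0
    · rw [hz, mul_zero, zero_mul]
    have hbe2 : BlockEquiv S₂ k l := Relation.EqvGen.rel k l ⟨hkl, Or.inl hz⟩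
    have hiff : BlockEquiv S₂ i' k ↔ BlockEquiv S₂ i' l :=
      ⟨fun h => Relation.EqvGen.trans i' k l h hbe2,
       fun h => Relation.EqvGen.trans i' l k h (Relation.EqvGen.symm k l hbe2)⟩
    have : d k = d l := by
      simp only [hd]
      rw [if_congr hiff rfl rfl]
    rw [this, mul_comm]
  -- interpolate the diagonal of P through the eigenvalues of S₂
  set q : ℂ[X] := Lagrange.interpolate Finset.univ (fun k : Fin n => S₂ k k) d with hq
  have hvs : Set.InjOn (fun k : Fin n => S₂ k k) ↑(Finset.univ : Finset (Fin n)) :=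
    fun a _ b _ hab => h2 hab
  have hqeval : ∀ k, q.eval (S₂ k k) = d k := fun k =>
    Lagrange.eval_interpolate_at_node (r := d) (s := Finset.univ) (v := fun k : Fin n => S₂ k k) hvs
      (Finset.mem_univ k)
  have hPq : P = Polynomial.aeval S₂ q := by
    rw [← sub_eq_zero]
    apply commutant_eq_zero hS₂ h2
    · rw [Matrix.sub_mul, Matrix.mul_sub, hPS, aeval_comm]
    · intro k
      rw [Matrix.sub_apply, hP, Matrix.diagonal_apply_eq, (hS₂.aeval q).2 k, hqeval k,
        sub_self]
  set Q : Matrix (Fin n) (Fin n) ℂ := Wᴴ * P * W with hQdef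
  have hQ : Q = Polynomial.aeval S₁ q := by
    rw [hQdef, hPq, conj_aeval hW hW', hconj]
  have hQH : Qᴴ = Q := by
    rw [hQdef, Matrix.conjTranspose_mul, Matrix.conjTranspose_mul,
      Matrix.conjTranspose_conjTranspose, hPH, Matrix.mul_assoc]
  have hQS : Q * S₁ = S₁ * Q := by
    rw [hQ]; exact aeval_comm q
  have hQij : Q i i = Q j j := diag_const_on_blockEquiv hS₁ h1 hQH hQS hbe
  have hQi : Q i i = 1 := by
    rw [hQ, (hS₁.aeval q).2 i, hμ, ← hi', hqeval i']
    simp only [hd]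
    rw [if_pos (show BlockEquiv S₂ i' i' from Relation.EqvGen.refl i')]
  have hQj : Q j j = 0 := by
    rw [hQ, (hS₁.aeval q).2 j, hν, ← hj', hqeval j']
    simp only [hd]
    rw [if_neg hne]
  rw [hQi, hQj] at hQij
  exact one_ne_zero hQij

lemma conj_conj {U : Matrix (Fin n) (Fin n) ℂ} (hU : Uᴴ * U = 1)
    (S : Matrix (Fin n) (Fin n) ℂ) : Uᴴ * (U * S * Uᴴ) * U = S := by
  have h1 : Uᴴ * (U * S * Uᴴ) * U = (Uᴴ * U) * S * (Uᴴ * U) := by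
    simp only [Matrix.mul_assoc]
  rw [h1, hU, Matrix.one_mul, Matrix.mul_one]

end SchurBlock

open SchurBlock in
/-- If `A` has `n` pairwise distinct eigenvalues (equivalently, the diagonal entries of
a Schur triangular factor are pairwise distinct), then the partition of the spectrum of
`A` into block-equivalence classes does not depend on the chosen Schur factorisation. -/
theorem blockEquiv_classes_independent_of_schur_factorisation
    {n : ℕ} (hn : 1 ≤ n) (A U₁ U₂ S₁ S₂ : Matrix (Fin n) (Fin n) ℂ)
    (hU₁ : U₁ᴴ * U₁ = 1) (hU₂ : U₂ᴴ * U₂ = 1)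
    (hS₁ : ∀ i j : Fin n, j < i → S₁ i j = 0)
    (hS₂ : ∀ i j : Fin n, j < i → S₂ i j = 0)
    (hA₁ : A = U₁ * S₁ * U₁ᴴ) (hA₂ : A = U₂ * S₂ * U₂ᴴ)
    (hdist : Function.Injective fun i : Fin n => S₁ i i) :
    ∀ μ ν : ℂ,
      (∃ i j : Fin n, S₁ i i = μ ∧ S₁ j j = ν ∧ BlockEquiv S₁ i j) ↔
      (∃ i j : Fin n, S₂ i i = μ ∧ S₂ j j = ν ∧ BlockEquiv S₂ i j) := by
  have hU₁' : U₁ * U₁ᴴ = 1 := mul_eq_one_comm.mp hU₁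
  have hU₂' : U₂ * U₂ᴴ = 1 := mul_eq_one_comm.mp hU₂
  have hc₁ : U₁ᴴ * A * U₁ = S₁ := by rw [hA₁]; exact conj_conj hU₁ S₁
  have hc₂ : U₂ᴴ * A * U₂ = S₂ := by rw [hA₂]; exact conj_conj hU₂ S₂
  set W : Matrix (Fin n) (Fin n) ℂ := U₂ᴴ * U₁ with hWdef
  have hWH : Wᴴ = U₁ᴴ * U₂ := by
    rw [hWdef, Matrix.conjTranspose_mul, Matrix.conjTranspose_conjTranspose]
  have hW : Wᴴ * W = 1 := by
    rw [hWdef, hWH]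
    calc U₁ᴴ * U₂ * (U₂ᴴ * U₁) = U₁ᴴ * (U₂ * (U₂ᴴ * U₁)) := by
          simp only [Matrix.mul_assoc]
      _ = U₁ᴴ * U₁ := by rw [mul_cancel_left hU₂']
      _ = 1 := hU₁
  have hW' : W * Wᴴ = 1 := by
    rw [hWdef, hWH]
    calc U₂ᴴ * U₁ * (U₁ᴴ * U₂) = U₂ᴴ * (U₁ * (U₁ᴴ * U₂)) := by
          simp only [Matrix.mul_assoc]
      _ = U₂ᴴ * U₂ := by rw [mul_cancel_left hU₁']
      _ = 1 := hU₂
  have hconj : Wᴴ * S₂ * W = S₁ := by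
    rw [hWdef, hWH, ← hc₂, ← hc₁]
    simp only [Matrix.mul_assoc, mul_cancel_left hU₂']
  have hconj' : W * S₁ * Wᴴ = S₂ := by
    rw [hWdef, hWH, ← hc₂, ← hc₁]
    simp only [Matrix.mul_assoc, mul_cancel_left hU₁']
  have hmem : ∀ μ : ℂ, (∃ i, S₁ i i = μ) ↔ (∃ i, S₂ i i = μ) :=
    diag_mem_iff hW hW' hS₁ hS₂ hconj'
  have hdist₂ : Function.Injective fun i : Fin n => S₂ i i :=
    diag_inj₂ hdist (fun μ h => (hmem μ).mp h)
  intro μ ν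
  constructor
  · exact key_transfer hW hW' hS₁ hS₂ hconj hdist hdist₂ (fun μ h => (hmem μ).mp h) μ ν
  · have hWH2 : (Wᴴ)ᴴ = W := Matrix.conjTranspose_conjTranspose W
    have hconj2 : (Wᴴ)ᴴ * S₁ * Wᴴ = S₂ := by rw [hWH2]; exact hconj'
    have hWa : (Wᴴ)ᴴ * Wᴴ = 1 := by rw [hWH2]; exact hW'
    have hWb : Wᴴ * (Wᴴ)ᴴ = 1 := by rw [hWH2]; exact hW
    exact key_transfer hWa hWb hS₂ hS₁ hconj2 hdist₂ hdist (fun μ h => (hmem μ).mpr h) μ ν
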